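/- The function t ↦ G⁻¹(t)/t is nondecreasing on (0, ∞) and nonincreasing on (−∞, 0); in fact its derivative equals (t − G⁻¹(t)·g(G⁻¹(t)))/(g(G⁻¹(t))·t²), which is ≥ 0 for t > 0 and < 0 for t < 0. -/

import Mathlib

open Real Filter Set

/-- The constant α = (9+3√5)/2. -/
noncomputable def alph : ℝ := (9 + 3 * Real.sqrt 5) / 2

/-- The constant β = 2 α^{3/2} √(α−1). -/
noncomputable def bet : ℝ := 2 * alph ^ ((3 : ℝ) / 2) * Real.sqrt (alph - 1)

/-- The change-of-variable function g (extended evenly to negative arguments):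
g(s) = √(1 − k s²) for |s| < (αk)^{−1/2}, and g(s) = 1/(βk s²) + √3/2 for |s| ≥ (αk)^{−1/2}. -/
noncomputable def g (k s : ℝ) : ℝ :=
  if |s| < 1 / Real.sqrt (alph * k) then Real.sqrt (1 - k * s ^ 2)
  else 1 / (bet * k * s ^ 2) + Real.sqrt 3 / 2

/-- G(t) = ∫₀ᵗ g(s) ds. -/
noncomputable def G (k t : ℝ) : ℝ := ∫ s in (0 : ℝ)..t, g k s


lemma h5 : Real.sqrt 5 ^ 2 = 5 := Real.sq_sqrt (by norm_num)
lemma h3 : Real.sqrt 3 ^ 2 = 3 := Real.sq_sqrt (by norm_num)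
lemma s5nn : (0:ℝ) ≤ Real.sqrt 5 := Real.sqrt_nonneg 5
lemma s3pos : (0:ℝ) < Real.sqrt 3 := Real.sqrt_pos.2 (by norm_num)

lemma alph_gt_one : 1 < alph := by
  unfold alph; nlinarith [s5nn]

lemma alph_pos : 0 < alph := lt_trans one_pos alph_gt_one

lemma sqrtA : Real.sqrt (alph * (alph - 1)) = Real.sqrt 3 * (2 + Real.sqrt 5) := by
  have e1 : alph * (alph - 1) = (Real.sqrt 3 * (2 + Real.sqrt 5)) ^ 2 := by
    unfold alph
    linear_combination (-3/4) * h5 - (4 + 4 * Real.sqrt 5 + Real.sqrt 5 ^ 2) * h3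
  rw [e1, Real.sqrt_sq (by positivity)]

lemma sqrtB : Real.sqrt (1 - 1 / alph) = Real.sqrt 3 * (1 + Real.sqrt 5) / 6 := by
  have hne : alph ≠ 0 := ne_of_gt alph_pos
  have e1 : 1 - 1 / alph = (Real.sqrt 3 * (1 + Real.sqrt 5) / 6) ^ 2 := by
    unfold alph at *
    have h9 : (9:ℝ) + 3 * Real.sqrt 5 ≠ 0 := by nlinarith [s5nn]
    field_simp
    linear_combination (-( (1+Real.sqrt 5)^2*(9+3*Real.sqrt 5))) * h3 + (-(45+9*Real.sqrt 5)) * h5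
  rw [e1, Real.sqrt_sq (by positivity)]

lemma match_eq : 1 / (2 * Real.sqrt (alph * (alph - 1))) + Real.sqrt 3 / 2
    = Real.sqrt (1 - 1 / alph) := by
  rw [sqrtA, sqrtB]
  have h1 : (2:ℝ) + Real.sqrt 5 ≠ 0 := by nlinarith [s5nn]
  have h2 : Real.sqrt 3 ≠ 0 := ne_of_gt s3pos
  field_simp
  ring_nf
  linear_combination (8 - 2*Real.sqrt 5^2) * h3 - 6 * h5

lemma bet_eq : bet = 2 * alph * Real.sqrt (alph * (alph - 1)) := by
  unfold bet
  rw [show (3:ℝ)/2 = 1 + 1/2 by norm_num, Real.rpow_add alph_pos, Real.rpow_one,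
    ← Real.sqrt_eq_rpow, Real.sqrt_mul alph_pos.le]
  ring

lemma bet_pos : 0 < bet := by
  rw [bet_eq]
  have h := Real.sqrt_pos.2 (show 0 < alph * (alph-1) by nlinarith [alph_gt_one])
  nlinarith [alph_pos, h]

variable {k : ℝ}

lemma sA_pos : 0 < Real.sqrt (alph * (alph - 1)) :=
  Real.sqrt_pos.2 (by nlinarith [alph_gt_one])

lemma s0_pos (hk : 0 < k) : 0 < 1 / Real.sqrt (alph * k) := by
  have := Real.sqrt_pos.2 (mul_pos alph_pos hk)
  positivity

lemma s0_sq (hk : 0 < k) : (1 / Real.sqrt (alph * k)) ^ 2 = 1 / (alph * k) := by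
  rw [div_pow, one_pow, Real.sq_sqrt (mul_pos alph_pos hk).le]

lemma ks0_lt_one (hk : 0 < k) : k * (1 / Real.sqrt (alph * k)) ^ 2 < 1 := by
  rw [s0_sq hk, mul_one_div, div_lt_one (mul_pos alph_pos hk)]
  nlinarith [alph_gt_one, hk]

lemma g_match (hk : 0 < k) {s : ℝ} (hs : s ^ 2 = 1 / (alph * k)) :
    1 / (bet * k * s ^ 2) + Real.sqrt 3 / 2 = Real.sqrt (1 - k * s ^ 2) := by
  have ha0 : alph ≠ 0 := ne_of_gt alph_pos
  have hks : k * s ^ 2 = 1 / alph := by rw [hs]; field_simp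
  have hbs : bet * k * s ^ 2 = bet / alph := by rw [mul_assoc, hks]; ring
  rw [hbs, hks]
  have hb : (1 : ℝ) / (bet / alph) = 1 / (2 * Real.sqrt (alph * (alph - 1))) := by
    rw [bet_eq]; field_simp
  rw [hb, match_eq]

lemma g_abs (k s : ℝ) : g k s = g k |s| := by
  simp [g, abs_abs, sq_abs]

lemma g_pos (hk : 0 < k) (s : ℝ) : 0 < g k s := by
  unfold g
  split_ifs with h
  · apply Real.sqrt_pos.2
    have h2 : k * s ^ 2 < k * (1 / Real.sqrt (alph * k)) ^ 2 := by
      rcases eq_or_ne s 0 with rfl | hs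
      · simpa using mul_pos hk (pow_pos (s0_pos hk) 2)
      · have : s ^ 2 < (1 / Real.sqrt (alph * k)) ^ 2 := by
          rw [← sq_abs s]
          exact pow_lt_pow_left₀ h (abs_nonneg s) (by norm_num)
        exact mul_lt_mul_of_pos_left this hk
    linarith [ks0_lt_one hk]
  · push_neg at h
    have hs : s ≠ 0 := by
      intro h0; rw [h0, abs_zero] at h; exact absurd h (not_le.2 (s0_pos hk))
    have h1 : 0 < 1 / (bet * k * s ^ 2) := by
      have := bet_pos
      positivity
    have h2 : 0 < Real.sqrt 3 / 2 := by positivity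
    linarith

lemma g_cont (hk : 0 < k) : Continuous (g k) := by
  set s0 := 1 / Real.sqrt (alph * k) with hs0
  have hs0p : 0 < s0 := s0_pos hk
  have heq : g k = fun s =>
      if |s| < s0 then Real.sqrt (1 - k * s ^ 2)
      else 1 / (bet * k * max (s ^ 2) (s0 ^ 2)) + Real.sqrt 3 / 2 := by
    funext s
    unfold g
    split_ifs with h
    · rfl
    · push_neg at h
      have : s0 ^ 2 ≤ s ^ 2 := by
        rw [← sq_abs s]; exact pow_le_pow_left₀ hs0p.le h 2
      rw [max_eq_left this]
  rw [heq]
  apply Continuous.if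
  · intro a ha
    have hfr : |a| = s0 := by
      have := frontier_lt_subset_eq (continuous_abs) (continuous_const) ha
      exact this
    have ha2 : a ^ 2 = s0 ^ 2 := by rw [← sq_abs a, hfr]
    have hs2 : a ^ 2 = 1 / (alph * k) := by rw [ha2, s0_sq hk]
    rw [ha2, max_self, ← ha2, ← g_match hk hs2]
  · exact (continuous_const.sub (continuous_const.mul (continuous_pow 2))).sqrt
  · apply Continuous.add _ continuous_const
    apply continuous_const.div (continuous_const.mul ((continuous_pow 2).max continuous_const))
    intro x
    have h1 : 0 < max (x ^ 2) (s0 ^ 2) := lt_max_of_lt_right (pow_pos hs0p 2)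
    have := bet_pos
    exact (mul_pos (mul_pos this hk) h1).ne'

lemma g_strictAntiOn (hk : 0 < k) {a b : ℝ} (ha : 0 ≤ a) (hab : a < b) :
    g k b < g k a := by
  set s0 := 1 / Real.sqrt (alph * k) with hs0
  have hs0p : 0 < s0 := s0_pos hk
  have hb0 : 0 < b := lt_of_le_of_lt ha hab
  have haa : |a| = a := abs_of_nonneg ha
  have hba : |b| = b := abs_of_pos hb0
  have hsq : a ^ 2 < b ^ 2 := by nlinarith
  unfold g
  rw [haa, hba]
  rcases lt_or_ge b s0 with hb | hb
  · have ha2 : a < s0 := lt_trans hab hb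
    rw [if_pos hb, if_pos ha2]
    apply Real.sqrt_lt_sqrt
    · have : k * b ^ 2 < 1 := by
        have : k * b ^ 2 < k * s0 ^ 2 := mul_lt_mul_of_pos_left (by nlinarith) hk
        linarith [ks0_lt_one hk]
      linarith
    · nlinarith
  · rw [if_neg (not_lt.2 hb)]
    have hbk : 0 < bet * k := mul_pos bet_pos hk
    have hmatch : 1 / (bet * k * s0 ^ 2) + Real.sqrt 3 / 2 = Real.sqrt (1 - k * s0 ^ 2) :=
      g_match hk (s0_sq hk)
    rcases lt_or_ge a s0 with ha2 | ha2
    · rw [if_pos ha2]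
      have h1 : 1 / (bet * k * b ^ 2) ≤ 1 / (bet * k * s0 ^ 2) := by
        apply one_div_le_one_div_of_le (by positivity)
        have : s0 ^ 2 ≤ b ^ 2 := by nlinarith
        nlinarith
      have h2 : Real.sqrt (1 - k * s0 ^ 2) < Real.sqrt (1 - k * a ^ 2) := by
        apply Real.sqrt_lt_sqrt
        · linarith [ks0_lt_one hk]
        · have : a ^ 2 < s0 ^ 2 := by nlinarith
          nlinarith
      linarith [hmatch]
    · rw [if_neg (not_lt.2 ha2)]
      have ha0 : 0 < a := lt_of_lt_of_le hs0p ha2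
      have : 1 / (bet * k * b ^ 2) < 1 / (bet * k * a ^ 2) := by
        apply one_div_lt_one_div_of_lt (by positivity)
        nlinarith
      linarith

lemma g_antiOn (hk : 0 < k) {a b : ℝ} (ha : 0 ≤ a) (hab : a ≤ b) :
    g k b ≤ g k a := by
  rcases eq_or_lt_of_le hab with rfl | h
  · exact le_refl _
  · exact (g_strictAntiOn hk ha h).le

lemma hasDerivAt_G (hk : 0 < k) (x : ℝ) : HasDerivAt (G k) (g k x) x :=
  intervalIntegral.integral_hasDerivAt_right ((g_cont hk).intervalIntegrable 0 x)
    ((g_cont hk).aestronglyMeasurable.stronglyMeasurableAtFilter)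
    (g_cont hk).continuousAt

lemma G_strictMono (hk : 0 < k) : StrictMono (G k) := by
  intro a b hab
  have h1 : G k a + ∫ s in a..b, g k s = G k b :=
    intervalIntegral.integral_add_adjacent_intervals
      ((g_cont hk).intervalIntegrable 0 a) ((g_cont hk).intervalIntegrable a b)
  have h2 : 0 < ∫ s in a..b, g k s :=
    intervalIntegral.intervalIntegral_pos_of_pos ((g_cont hk).intervalIntegrable a b)
      (g_pos hk) hab
  linarith

lemma G_zero : G k 0 = 0 := intervalIntegral.integral_same

lemma num_nonneg (hk : 0 < k) {x : ℝ} (hx : 0 ≤ x) : x * g k x ≤ G k x := by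
  have h1 : (∫ s in (0:ℝ)..x, g k x) ≤ ∫ s in (0:ℝ)..x, g k s := by
    apply intervalIntegral.integral_mono_on hx
      (intervalIntegrable_const) ((g_cont hk).intervalIntegrable 0 x)
    intro s hs
    exact g_antiOn hk hs.1 hs.2
  simpa [mul_comm, G] using h1

lemma num_neg (hk : 0 < k) {x : ℝ} (hx : x < 0) : G k x < x * g k x := by
  have h1 : (∫ s in x..(0:ℝ), g k x) < ∫ s in x..(0:ℝ), g k s := by
    apply intervalIntegral.integral_lt_integral_of_continuousOn_of_le_of_exists_lt hx
      continuousOn_const (g_cont hk).continuousOn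
    · intro s hs
      rw [g_abs k s, g_abs k x]
      apply g_antiOn hk (abs_nonneg s)
      rw [abs_of_neg hx, abs_of_nonpos hs.2]
      linarith [hs.1]
    · refine ⟨x / 2, ⟨by linarith, by linarith⟩, ?_⟩
      rw [g_abs k (x/2), g_abs k x]
      apply g_strictAntiOn hk (abs_nonneg _)
      rw [abs_of_neg hx, abs_of_neg (by linarith : x / 2 < 0)]
      linarith
  have h2 : G k x = -∫ s in x..(0:ℝ), g k s := by
    rw [G, intervalIntegral.integral_symm]
  rw [intervalIntegral.integral_const] at h1
  rw [h2]
  have : (0 - x) • g k x = -(x * g k x) := by rw [smul_eq_mul]; ring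
  rw [this] at h1
  linarith


/-- t ↦ G⁻¹(t)/t is nondecreasing on (0, ∞) and nonincreasing on (−∞, 0); its derivative
equals (t − G⁻¹(t)g(G⁻¹(t)))/(g(G⁻¹(t))t²), which is ≥ 0 for t > 0 and < 0 for t < 0. -/
theorem stmt11 (k : ℝ) (hk : 0 < k) (Ginv : ℝ → ℝ)
    (hL : Function.LeftInverse Ginv (G k)) (hR : Function.RightInverse Ginv (G k)) :
    MonotoneOn (fun t : ℝ => Ginv t / t) (Set.Ioi 0) ∧
    AntitoneOn (fun t : ℝ => Ginv t / t) (Set.Iio 0) ∧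
    ∀ t : ℝ, t ≠ 0 →
      deriv (fun s : ℝ => Ginv s / s) t
          = (t - Ginv t * g k (Ginv t)) / (g k (Ginv t) * t ^ 2) ∧
        (0 < t → 0 ≤ (t - Ginv t * g k (Ginv t)) / (g k (Ginv t) * t ^ 2)) ∧
        (t < 0 → (t - Ginv t * g k (Ginv t)) / (g k (Ginv t) * t ^ 2) < 0) := by
  have hGmono := G_strictMono hk
  have hGinvMono : StrictMono Ginv := by
    intro a b hab
    by_contra h
    push_neg at h
    have := hGmono.monotone h
    rw [hR a, hR b] at this
    exact absurd hab (not_lt.2 this)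
  have hGinvSurj : Function.Surjective Ginv := hL.surjective
  have hGinvCont : Continuous Ginv := by
    have h := (StrictMono.orderIsoOfSurjective Ginv hGinvMono hGinvSurj).continuous
    rwa [StrictMono.coe_orderIsoOfSurjective] at h
  have hGinv0 : Ginv 0 = 0 := by
    have := hL 0
    rwa [G_zero] at this
  have hDGinv : ∀ t, HasDerivAt Ginv (g k (Ginv t))⁻¹ t := fun t =>
    HasDerivAt.of_local_left_inverse hGinvCont.continuousAt
      (hasDerivAt_G hk (Ginv t)) (g_pos hk (Ginv t)).ne'
      (Filter.Eventually.of_forall hR)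
  -- derivative formula at t ≠ 0
  have hDq : ∀ t : ℝ, t ≠ 0 → HasDerivAt (fun s : ℝ => Ginv s / s)
      ((t - Ginv t * g k (Ginv t)) / (g k (Ginv t) * t ^ 2)) t := by
    intro t ht
    have h := (hDGinv t).div (hasDerivAt_id t) ht
    have heq : ((g k (Ginv t))⁻¹ * t - Ginv t * 1) / t ^ 2
        = (t - Ginv t * g k (Ginv t)) / (g k (Ginv t) * t ^ 2) := by
      have hg0 : g k (Ginv t) ≠ 0 := (g_pos hk (Ginv t)).ne'
      field_simp
    simp only [id_eq] at h
    rwa [heq] at h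
  have hsign : ∀ t : ℝ, (0 < t → 0 ≤ (t - Ginv t * g k (Ginv t)) / (g k (Ginv t) * t ^ 2)) ∧
      (t < 0 → (t - Ginv t * g k (Ginv t)) / (g k (Ginv t) * t ^ 2) < 0) := by
    intro t
    constructor
    · intro ht
      apply div_nonneg
      · have hx : 0 < Ginv t := by
          have := hGinvMono ht
          rwa [hGinv0] at this
        have h1 := num_nonneg hk hx.le
        rw [hR t] at h1
        linarith
      · exact (mul_pos (g_pos hk (Ginv t)) (pow_pos ht 2)).le
    · intro ht
      apply div_neg_of_neg_of_pos
      · have hx : Ginv t < 0 := by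
          have := hGinvMono ht
          rwa [hGinv0] at this
        have h1 := num_neg hk hx
        rw [hR t] at h1
        linarith
      · exact mul_pos (g_pos hk (Ginv t)) (pow_two_pos_of_ne_zero (ne_of_lt ht))
  refine ⟨?_, ?_, fun t ht => ⟨(hDq t ht).deriv, (hsign t).1, (hsign t).2⟩⟩
  · apply monotoneOn_of_deriv_nonneg (convex_Ioi 0)
    · intro t ht
      exact ((hDq t (ne_of_gt ht)).continuousAt).continuousWithinAt
    · intro t ht
      rw [interior_Ioi] at ht
      exact ((hDq t (ne_of_gt ht)).differentiableAt).differentiableWithinAt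
    · intro t ht
      rw [interior_Ioi] at ht
      rw [(hDq t (ne_of_gt ht)).deriv]
      exact (hsign t).1 ht
  · apply antitoneOn_of_deriv_nonpos (convex_Iio 0)
    · intro t ht
      exact ((hDq t (ne_of_lt ht)).continuousAt).continuousWithinAt
    · intro t ht
      rw [interior_Iio] at ht
      exact ((hDq t (ne_of_lt ht)).differentiableAt).differentiableWithinAt
    · intro t ht
      rw [interior_Iio] at ht
      rw [(hDq t (ne_of_lt ht)).deriv]
      exact le_of_lt ((hsign t).2 ht)
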